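/- Let f = Σ_{i=1}^k u_i M_i ∈ K[x_1,...,x_n] with u_i ∈ K nonzero and M_1,...,M_k pairwise coprime monomials of the same degree d ≥ 1. Then the ideal (x_1·∂f/∂x_1, ..., x_n·∂f/∂x_n) equals the complete intersection ideal (M_1,...,M_k). -/
import Mathlib


open MvPolynomial

lemma stmt_10_aux {K : Type*} [CommRing K] {n : ℕ} (s : Fin n →₀ ℕ) (i : Fin n)
    (a : K) : X i * pderiv i (monomial s a) = C (s i : K) * monomial s a := by
  rw [pderiv_monomial]
  rcases Nat.eq_zero_or_pos (s i) with h | h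
  · simp [h]
  · have hs : Finsupp.single i 1 + (s - Finsupp.single i 1) = s := by
      ext b
      by_cases hb : b = i
      · subst hb; simp [Finsupp.single_apply]; omega
      · simp [Finsupp.single_apply, hb, Ne.symm hb]
    rw [X, monomial_mul, C_mul_monomial, one_mul, hs, mul_comm]

/-- for `f = ∑ u_i M_i` with `u_i ≠ 0` and `M_i` pairwise coprime
monomials (disjoint supports of exponent vectors) of the same degree `d ≥ 1`,
the ideal `(x_1 ∂f/∂x_1, …, x_n ∂f/∂x_n)` equals the complete intersection
ideal `(M_1, …, M_k)`. -/
theorem stmt_10 {K : Type*} [Field K] [CharZero K] {n k d : ℕ} (hd : 1 ≤ d)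
    (u : Fin k → K) (hu : ∀ i, u i ≠ 0)
    (m : Fin k → (Fin n →₀ ℕ))
    (hdisj : ∀ i j, i ≠ j → Disjoint (m i).support (m j).support)
    (hdeg : ∀ i, (m i).sum (fun _ e => e) = d)
    (f : MvPolynomial (Fin n) K)
    (hf : f = ∑ i, C (u i) * monomial (m i) 1) :
    Ideal.span (Set.range fun i : Fin n => X i * pderiv i f) =
      Ideal.span (Set.range fun i : Fin k => (monomial (m i) 1 :
        MvPolynomial (Fin n) K)) := by
  have key : ∀ i : Fin n, X i * pderiv i f
      = ∑ j, C ((m j i : K)) * (C (u j) * monomial (m j) 1) := by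
    intro i
    rw [hf, map_sum, Finset.mul_sum]
    refine Finset.sum_congr rfl fun j _ => ?_
    rw [C_mul_monomial, stmt_10_aux, C_mul_monomial]
  apply le_antisymm <;> rw [Ideal.span_le] <;> rintro _ ⟨i, rfl⟩ <;>
    simp only [SetLike.mem_coe]
  · rw [key]
    refine Ideal.sum_mem _ fun j _ => Ideal.mul_mem_left _ _
      (Ideal.mul_mem_left _ _ (Ideal.subset_span ⟨j, rfl⟩))
  · -- find a variable in the support of m i
    have hne : (m i).support.Nonempty := by
      rw [Finsupp.support_nonempty_iff]
      intro h0
      have := hdeg i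
      rw [h0, Finsupp.sum_zero_index] at this
      omega
    obtain ⟨t, ht⟩ := hne
    have htm : (m i) t ≠ 0 := Finsupp.mem_support_iff.mp ht
    have hcoef : (((m i) t : K) * u i) ≠ 0 :=
      mul_ne_zero (Nat.cast_ne_zero.mpr htm) (hu i)
    have heq : X t * pderiv t f
        = C (((m i) t : K) * u i) * monomial (m i) 1 := by
      rw [key, C_mul, mul_assoc]
      refine Finset.sum_eq_single i (fun j _ hj => ?_) (by simp)
      have hz : (m j) t = 0 := by
        rw [← Finsupp.notMem_support_iff]
        exact Finset.disjoint_left.mp (hdisj i j (Ne.symm hj)) ht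
      simp [hz]
    have hmem : (monomial (m i) 1 : MvPolynomial (Fin n) K)
        = C (((m i) t : K) * u i)⁻¹ * (X t * pderiv t f) := by
      rw [heq, ← mul_assoc, ← C_mul, inv_mul_cancel₀ hcoef, C_1, one_mul]
    rw [hmem]
    exact Ideal.mul_mem_left _ _ (Ideal.subset_span ⟨t, rfl⟩)
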